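/- arXiv:1703.05672 — 2 statements merged into one kernel-verified Lean document; each statement's English description precedes it below -/
import Mathlib

section
/- Let events A₁,…,Aₙ in a probability space satisfy Pr(Aᵢ) ≤ p for all i, and suppose each Aᵢ is mutually independent of all but at most D of the other events. If e·p·(D+1) ≤ 1, then Pr(⋂ᵢ Āᵢ) > 0. -/
open MeasureTheory ProbabilityTheory

lemma lll_exp_aux (m : ℕ) (hm : 1 ≤ m) : ((m + 1 : ℝ) / m) ^ m ≤ Real.exp 1 := by
  have hm0 : (0:ℝ) < m := by exact_mod_cast hm
  have h1 : (m + 1 : ℝ) / m ≤ Real.exp (1 / m) := by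
    have := Real.add_one_le_exp (1 / (m:ℝ))
    calc (m + 1 : ℝ) / m = 1 / m + 1 := by field_simp; ring
    _ ≤ Real.exp (1 / m) := this
  calc ((m + 1 : ℝ) / m) ^ m ≤ Real.exp (1 / m) ^ m := by
        apply pow_le_pow_left₀ (by positivity) h1
  _ = Real.exp 1 := by
        rw [← Real.exp_nat_mul]
        congr 1
        field_simp

lemma lll_p_bound (p : ℝ) (D : ℕ) (hp0 : 0 < p)
    (hpD : Real.exp 1 * p * (D + 1) ≤ 1) :
    p ≤ (1 / ((D:ℝ) + 2)) * (((D:ℝ) + 1) / ((D:ℝ) + 2)) ^ D := by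
  have he : (0:ℝ) < Real.exp 1 := Real.exp_pos 1
  set c : ℝ := (D : ℝ) with hc
  have hc0 : (0:ℝ) ≤ c := Nat.cast_nonneg D
  have hp1 : p ≤ 1 / (Real.exp 1 * (c + 1)) := by
    rw [le_div_iff₀ (by positivity)]
    nlinarith [hpD]
  have haux : ((c + 2) / (c + 1)) ^ (D + 1) ≤ Real.exp 1 := by
    have := lll_exp_aux (D + 1) (Nat.le_add_left 1 D)
    push_cast at this
    convert this using 3 <;> ring
  have hkey : (c + 2) ^ (D + 1) ≤ Real.exp 1 * (c + 1) ^ (D + 1) := by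
    have h2 : ((c + 2) / (c + 1)) ^ (D + 1) = (c + 2) ^ (D + 1) / (c + 1) ^ (D + 1) :=
      div_pow _ _ _
    rw [h2, div_le_iff₀ (by positivity)] at haux
    linarith [haux]
  refine hp1.trans ?_
  rw [div_mul_eq_mul_div, one_mul, div_pow, div_div,
    div_le_div_iff₀ (by positivity) (by positivity), one_mul]
  calc (c + 2) ^ D * (c + 2) = (c + 2) ^ (D + 1) := (pow_succ _ _).symm
  _ ≤ Real.exp 1 * (c + 1) ^ (D + 1) := hkey
  _ = (c + 1) ^ D * (Real.exp 1 * (c + 1)) := by rw [pow_succ]; ring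

/-- symmetric Lovász Local Lemma: If events `A 1, …, A n` each have
probability at most `p`, each `A i` is mutually independent (in the sense of
independence of generated σ-algebras) of all other events except at most `D` of them,
and `e·p·(D+1) ≤ 1`, then `Pr(⋂ i, (A i)ᶜ) > 0`. -/
theorem stmt_8 {Ω : Type*} [MeasurableSpace Ω] (μ : Measure Ω) [IsProbabilityMeasure μ]
    (n : ℕ) (A : Fin n → Set Ω) (hA : ∀ i, MeasurableSet (A i))
    (p : ℝ) (D : ℕ)
    (hp : ∀ i, μ (A i) ≤ ENNReal.ofReal p)
    (hindep : ∀ i : Fin n, ∃ J : Finset (Fin n), i ∉ J ∧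
        (Finset.univ \ insert i J).card ≤ D ∧
        ProbabilityTheory.Indep
          (MeasurableSpace.generateFrom {A i})
          (MeasurableSpace.generateFrom {s : Set Ω | ∃ j ∈ J, s = A j}) μ)
    (hpD : Real.exp 1 * p * (D + 1) ≤ 1) :
    0 < μ (⋂ i, (A i)ᶜ) := by
  classical
  set x : ℝ := 1 / ((D:ℝ) + 2) with hxdef
  have hx0 : 0 < x := by positivity
  have h1x : 1 - x = ((D:ℝ) + 1) / ((D:ℝ) + 2) := by
    rw [hxdef]; field_simp; ring
  have h1x0 : 0 < 1 - x := by rw [h1x]; positivity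
  have h1x1 : 1 - x ≤ 1 := by nlinarith
  set P : Set Ω → ℝ := fun s => (μ s).toReal with hPdef
  have hfin : ∀ s : Set Ω, μ s ≠ ⊤ := fun s => measure_ne_top μ s
  have hPmono : ∀ {s t : Set Ω}, s ⊆ t → P s ≤ P t := fun h =>
    ENNReal.toReal_mono (hfin _) (measure_mono h)
  have hPnonneg : ∀ s, 0 ≤ P s := fun s => ENNReal.toReal_nonneg
  -- probability bound for each event
  have hPA : ∀ i, P (A i) ≤ x * (1 - x) ^ D := by
    intro i
    rcases le_or_gt p 0 with h | h
    · have h0 : μ (A i) = 0 :=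
        le_antisymm (le_trans (hp i) (by simp [ENNReal.ofReal_eq_zero.2 h])) zero_le
      have : P (A i) = 0 := by rw [hPdef]; simp [h0]
      rw [this]; positivity
    · have h1 : P (A i) ≤ p := by
        have := ENNReal.toReal_mono (by simp) (hp i)
        rwa [ENNReal.toReal_ofReal h.le] at this
      refine h1.trans ?_
      rw [hxdef, h1x]
      exact lll_p_bound p D h hpD
  -- splitting a measure along an event
  have hsplit : ∀ (s : Set Ω) (j : Fin n), P (s ∩ A j) + P (s ∩ (A j)ᶜ) = P s := by
    intro s j
    rw [hPdef]
    simp only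
    rw [← ENNReal.toReal_add (hfin _) (hfin _)]
    congr 1
    have := measure_inter_add_diff (μ := μ) s (hA j)
    rwa [Set.diff_eq] at this
  -- main induction: conditional probability bound
  have key : ∀ (m : ℕ) (S : Finset (Fin n)), S.card = m → ∀ i, i ∉ S →
      P (A i ∩ ⋂ j ∈ S, (A j)ᶜ) ≤ x * P (⋂ j ∈ S, (A j)ᶜ) := by
    intro m
    induction m using Nat.strong_induction_on with
    | _ m IH =>
      intro S hScard i hiS
      obtain ⟨J, hiJ, hDcard, hind⟩ := hindep i
      set S₁ : Finset (Fin n) := S \ J with hS₁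
      set S₂ : Finset (Fin n) := S ∩ J with hS₂
      have hS₂J : S₂ ⊆ J := Finset.inter_subset_right
      have hunion : S₂ ∪ S₁ = S := by
        rw [hS₁, hS₂, Finset.union_comm]; exact Finset.sdiff_union_inter S J
      have hS₁D : S₁.card ≤ D := by
        refine le_trans (Finset.card_le_card ?_) hDcard
        intro j hj
        rw [hS₁, Finset.mem_sdiff] at hj
        simp only [Finset.mem_sdiff, Finset.mem_univ, true_and, Finset.mem_insert]
        push_neg
        exact ⟨fun h => hiS (h ▸ hj.1), hj.2⟩
      -- peeling off the dependent events one by one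
      have hpeel : ∀ U : Finset (Fin n), U ⊆ S₁ →
          (1 - x) ^ U.card * P (⋂ j ∈ S₂, (A j)ᶜ) ≤ P (⋂ j ∈ S₂ ∪ U, (A j)ᶜ) := by
        intro U
        induction U using Finset.induction_on with
        | empty => simp
        | @insert j U hjU IHU =>
          intro hins
          have hjS₁ : j ∈ S₁ := hins (Finset.mem_insert_self j U)
          have hjS : j ∈ S := (Finset.mem_sdiff.1 hjS₁).1
          have hUS₁ : U ⊆ S₁ := (Finset.subset_insert j U).trans hins
          have hjT : j ∉ S₂ ∪ U := by
            rw [Finset.mem_union]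
            rintro (h | h)
            · exact (Finset.mem_sdiff.1 hjS₁).2 (Finset.mem_inter.1 h).2
            · exact hjU h
          have hTsub : S₂ ∪ U ⊆ S := by
            rw [← hunion]; exact Finset.union_subset_union_right hUS₁
          have hTlt : (S₂ ∪ U).card < m := by
            rw [← hScard]
            exact Finset.card_lt_card ((Finset.ssubset_iff_of_subset hTsub).2 ⟨j, hjS, hjT⟩)
          have hIH := IH _ hTlt (S₂ ∪ U) rfl j hjT
          have hEq : (⋂ k ∈ S₂ ∪ insert j U, (A k)ᶜ) = (⋂ k ∈ S₂ ∪ U, (A k)ᶜ) ∩ (A j)ᶜ := by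
            rw [Finset.union_insert, Finset.set_biInter_insert]
            exact Set.inter_comm _ _
          rw [hEq]
          have hsp := hsplit (⋂ k ∈ S₂ ∪ U, (A k)ᶜ) j
          rw [Set.inter_comm] at hIH
          have h2 : (1 - x) * P (⋂ k ∈ S₂ ∪ U, (A k)ᶜ) ≤
              P ((⋂ k ∈ S₂ ∪ U, (A k)ᶜ) ∩ (A j)ᶜ) := by nlinarith
          calc (1 - x) ^ (insert j U).card * P (⋂ k ∈ S₂, (A k)ᶜ)
              = (1 - x) * ((1 - x) ^ U.card * P (⋂ k ∈ S₂, (A k)ᶜ)) := by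
                rw [Finset.card_insert_of_notMem hjU]; ring
            _ ≤ (1 - x) * P (⋂ k ∈ S₂ ∪ U, (A k)ᶜ) :=
                mul_le_mul_of_nonneg_left (IHU hUS₁) h1x0.le
            _ ≤ _ := h2
      -- independence step
      have hmeas2 : MeasurableSet[MeasurableSpace.generateFrom
          {s : Set Ω | ∃ j ∈ J, s = A j}] (⋂ j ∈ S₂, (A j)ᶜ) := by
        refine Finset.measurableSet_biInter _ fun j hj => ?_
        have hmem : A j ∈ {s : Set Ω | ∃ j ∈ J, s = A j} := ⟨j, hS₂J hj, rfl⟩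
        exact (MeasurableSpace.measurableSet_generateFrom hmem).compl
      have hmeas1 : MeasurableSet[MeasurableSpace.generateFrom {A i}] (A i) :=
        MeasurableSpace.measurableSet_generateFrom rfl
      have hindeq : μ (A i ∩ ⋂ j ∈ S₂, (A j)ᶜ) = μ (A i) * μ (⋂ j ∈ S₂, (A j)ᶜ) :=
        (Indep_iff _ _ μ).1 hind _ _ hmeas1 hmeas2
      have hPind : P (A i ∩ ⋂ j ∈ S₂, (A j)ᶜ) = P (A i) * P (⋂ j ∈ S₂, (A j)ᶜ) := by
        rw [hPdef]; simp only; rw [hindeq, ENNReal.toReal_mul]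
      have hsubS₂ : (⋂ j ∈ S, (A j)ᶜ) ⊆ ⋂ j ∈ S₂, (A j)ᶜ := by
        intro ω hω
        simp only [Set.mem_iInter] at hω ⊢
        intro j hj
        exact hω j (Finset.mem_of_mem_inter_left hj)
      have hpowle : (1 - x) ^ D ≤ (1 - x) ^ S₁.card :=
        pow_le_pow_of_le_one h1x0.le h1x1 hS₁D
      have hpeelS := hpeel S₁ (Finset.Subset.refl S₁)
      rw [hunion] at hpeelS
      calc P (A i ∩ ⋂ j ∈ S, (A j)ᶜ)
          ≤ P (A i ∩ ⋂ j ∈ S₂, (A j)ᶜ) :=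
            hPmono (Set.inter_subset_inter_right _ hsubS₂)
        _ = P (A i) * P (⋂ j ∈ S₂, (A j)ᶜ) := hPind
        _ ≤ (x * (1 - x) ^ D) * P (⋂ j ∈ S₂, (A j)ᶜ) :=
            mul_le_mul_of_nonneg_right (hPA i) (hPnonneg _)
        _ ≤ (x * (1 - x) ^ S₁.card) * P (⋂ j ∈ S₂, (A j)ᶜ) := by
            have := mul_le_mul_of_nonneg_right
              (mul_le_mul_of_nonneg_left hpowle hx0.le) (hPnonneg (⋂ j ∈ S₂, (A j)ᶜ))
            exact this
        _ = x * ((1 - x) ^ S₁.card * P (⋂ j ∈ S₂, (A j)ᶜ)) := by ring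
        _ ≤ x * P (⋂ j ∈ S, (A j)ᶜ) := mul_le_mul_of_nonneg_left hpeelS hx0.le
  -- lower bound for the intersection
  have hall : ∀ S : Finset (Fin n), (1 - x) ^ S.card ≤ P (⋂ j ∈ S, (A j)ᶜ) := by
    intro S
    induction S using Finset.induction_on with
    | empty => simp [hPdef]
    | @insert j S hjS IHS =>
      have hIH := key S.card S rfl j hjS
      rw [Set.inter_comm] at hIH
      have hsp := hsplit (⋂ k ∈ S, (A k)ᶜ) j
      have hEq : (⋂ k ∈ insert j S, (A k)ᶜ) = (⋂ k ∈ S, (A k)ᶜ) ∩ (A j)ᶜ := by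
        rw [Finset.set_biInter_insert]
        exact Set.inter_comm _ _
      rw [hEq, Finset.card_insert_of_notMem hjS]
      have : (1 - x) ^ (S.card + 1) ≤ (1 - x) * P (⋂ k ∈ S, (A k)ᶜ) := by
        rw [pow_succ]
        calc (1 - x) ^ S.card * (1 - x) = (1 - x) * (1 - x) ^ S.card := by ring
          _ ≤ (1 - x) * P (⋂ k ∈ S, (A k)ᶜ) := mul_le_mul_of_nonneg_left IHS h1x0.le
      nlinarith
  have hEqU : (⋂ i, (A i)ᶜ) = ⋂ j ∈ (Finset.univ : Finset (Fin n)), (A j)ᶜ := by simp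
  rw [hEqU]
  have hge := hall Finset.univ
  have hpos : 0 < P (⋂ j ∈ (Finset.univ : Finset (Fin n)), (A j)ᶜ) :=
    lt_of_lt_of_le (by positivity) hge
  refine pos_iff_ne_zero.2 fun h0 => ?_
  rw [hPdef] at hpos
  simp only [h0, ENNReal.toReal_zero] at hpos
  exact lt_irrefl 0 hpos
end

section
/- Every graph G with maximum degree Δ admits a proper edge colouring using colours from any prescribed set L of Δ+1 integers. -/
open SimpleGraph
set_option linter.unusedSectionVars false

section Vizing

variable {V : Type*} [Fintype V] [DecidableEq V] (G : SimpleGraph V) [DecidableRel G.Adj] (n : ℕ)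

/-- A proper partial edge coloring of `G` with colors in `Fin n`. -/
structure PC where
  f : V → V → Option (Fin n)
  symm : ∀ u v, f u v = f v u
  adj : ∀ u v, f u v ≠ none → G.Adj u v
  proper : ∀ ⦃u v w : V⦄ ⦃c : Fin n⦄, f u v = some c → f u w = some c → v = w

variable {G n}

namespace PC

def Missing (C : PC G n) (c : Fin n) (u : V) : Prop := ∀ v, C.f u v ≠ some c

lemma f_self (C : PC G n) (u : V) : C.f u u = none := by
  by_contra h
  exact G.irrefl (C.adj u u h)

lemma ne_of_adjf {C : PC G n} {u v : V} {c : Fin n} (h : C.f u v = some c) : u ≠ v := by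
  intro huv; subst huv; rw [C.f_self] at h; exact nomatch h

/-- Every vertex misses some color, provided `n` exceeds all degrees. -/
lemma exists_missing (C : PC G n) (hn : ∀ v : V, G.degree v < n) (u : V) :
    ∃ c, C.Missing c u := by
  by_contra h
  push_neg at h
  simp only [PC.Missing] at h
  push_neg at h
  choose F hF using h
  have hinj : Function.Injective F := by
    intro c₁ c₂ hcc
    have h1 := hF c₁
    have h2 := hF c₂
    rw [hcc] at h1
    rw [h1] at h2
    exact Option.some_injective _ h2
  have hmem : ∀ c, F c ∈ G.neighborFinset u := by
    intro c
    rw [SimpleGraph.mem_neighborFinset]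
    exact C.adj u (F c) (by rw [hF c]; exact Option.some_ne_none _)
  have : n ≤ G.degree u := by
    rw [← Fintype.card_fin n, ← SimpleGraph.card_neighborFinset_eq_degree]
    rw [← Finset.card_univ]
    exact Finset.card_le_card_of_injOn F (fun c _ => hmem c) (fun a _ b _ h => hinj h)
  exact absurd (hn u) (not_lt.2 this)

/-- Color (or recolor) the edge `xy` with color `c`, assuming `c` is missing at both ends. -/
def setEdge (C : PC G n) (x y : V) (c : Fin n) (hadj : G.Adj x y)
    (hx : C.Missing c x) (hy : C.Missing c y) : PC G n where
  f u v := if (u = x ∧ v = y) ∨ (u = y ∧ v = x) then some c else C.f u v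
  symm u v := by
    by_cases h : (u = x ∧ v = y) ∨ (u = y ∧ v = x)
    · rw [if_pos h, if_pos (h.symm.imp And.symm And.symm)]
    · rw [if_neg h, if_neg (fun h' => h (h'.symm.imp And.symm And.symm)), C.symm]
  adj u v := by
    by_cases h : (u = x ∧ v = y) ∨ (u = y ∧ v = x)
    · intro _
      rcases h with ⟨h1, h2⟩ | ⟨h1, h2⟩ <;> subst h1 <;> subst h2
      · exact hadj
      · exact hadj.symm
    · rw [if_neg h]; exact C.adj u v
  proper := by
    intro u v w d h1 h2
    have hxy : x ≠ y := G.ne_of_adj hadj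
    by_cases hv : (u = x ∧ v = y) ∨ (u = y ∧ v = x) <;>
      by_cases hw : (u = x ∧ w = y) ∨ (u = y ∧ w = x)
    · rcases hv with ⟨hu1, hv1⟩ | ⟨hu1, hv1⟩ <;> rcases hw with ⟨hu2, hw2⟩ | ⟨hu2, hw2⟩
      · rw [hv1, hw2]
      · exact absurd (hu1.symm.trans hu2) hxy
      · exact absurd (hu2.symm.trans hu1) hxy
      · rw [hv1, hw2]
    · rw [if_pos hv] at h1
      rw [if_neg hw] at h2
      exfalso
      have hdc : d = c := by injection h1.symm
      subst hdc
      rcases hv with ⟨h1', _⟩ | ⟨h1', _⟩ <;> subst h1'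
      · exact hx w h2
      · exact hy w h2
    · rw [if_neg hv] at h1
      rw [if_pos hw] at h2
      exfalso
      have hdc : d = c := by injection h2.symm
      subst hdc
      rcases hw with ⟨h1', _⟩ | ⟨h1', _⟩ <;> subst h1'
      · exact hx v h1
      · exact hy v h1
    · rw [if_neg hv] at h1
      rw [if_neg hw] at h2
      exact C.proper h1 h2

lemma setEdge_f_eq (C : PC G n) {x y : V} {c : Fin n} {hadj hx hy} {u v : V}
    (hu : ¬((u = x ∧ v = y) ∨ (u = y ∧ v = x))) :
    (C.setEdge x y c hadj hx hy).f u v = C.f u v := if_neg hu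

lemma setEdge_f_self (C : PC G n) {x y : V} {c : Fin n} {hadj hx hy} :
    (C.setEdge x y c hadj hx hy).f x y = some c := by
  simp [setEdge]

lemma setEdge_dom (C : PC G n) {x y : V} {c : Fin n} {hadj hx hy} {u v : V}
    (h : C.f u v ≠ none) : (C.setEdge x y c hadj hx hy).f u v ≠ none := by
  by_cases hu : (u = x ∧ v = y) ∨ (u = y ∧ v = x)
  · show (if _ then _ else _) ≠ none
    rw [if_pos hu]; exact Option.some_ne_none _
  · rwa [C.setEdge_f_eq hu]

end PC

variable (G) in
/-- `IsFan C x l` : `l = [y_k, …, y_1, y_0]` is a fan at `x` (in reverse order):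
`x y_0` is an uncolored edge, each `x y_{i}` (i ≥ 1) is colored and its color is
missing at `y_{i-1}`. -/
inductive IsFan (C : PC G n) (x : V) : List V → Prop
  | single (y₀ : V) (hadj : G.Adj x y₀) (hnone : C.f x y₀ = none) : IsFan C x [y₀]
  | cons (y y' : V) (rest : List V) (h : IsFan C x (y' :: rest)) (hadj : G.Adj x y)
      (hne : y ∉ y' :: rest) (c : Fin n) (hc : C.f x y = some c)
      (hmiss : C.Missing c y') : IsFan C x (y :: y' :: rest)

namespace IsFan

lemma nonempty {C : PC G n} {x : V} {l : List V} (h : IsFan G C x l) : l ≠ [] := by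
  cases h <;> simp

lemma mem_adj {C : PC G n} {x : V} {l : List V} (h : IsFan G C x l) :
    ∀ y ∈ l, G.Adj x y := by
  induction h with
  | single y₀ hadj _ => simpa using hadj
  | cons y y' rest h hadj hne c hc hmiss ih =>
      intro z hz
      rcases List.mem_cons.1 hz with rfl | hz
      · exact hadj
      · exact ih z hz

lemma nodup {C : PC G n} {x : V} {l : List V} (h : IsFan G C x l) : l.Nodup := by
  induction h with
  | single y₀ _ _ => simp
  | cons y y' rest h hadj hne c hc hmiss ih => exact List.nodup_cons.2 ⟨hne, ih⟩

lemma getLast_none {C : PC G n} {x : V} {l : List V} (h : IsFan G C x l) :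
    C.f x (l.getLast h.nonempty) = none := by
  induction h with
  | single y₀ _ hnone => simpa using hnone
  | cons y y' rest h hadj hne c hc hmiss ih =>
      rw [List.getLast_cons (h.nonempty)]
      exact ih

lemma cons_elim {C : PC G n} {x y y' : V} {rest : List V}
    (h : IsFan G C x (y :: y' :: rest)) :
    IsFan G C x (y' :: rest) ∧ G.Adj x y ∧ y ∉ y' :: rest ∧
      ∃ c : Fin n, C.f x y = some c ∧ C.Missing c y' := by
  cases h with
  | cons _ _ _ h hadj hne c hc hm => exact ⟨h, hadj, hne, c, hc, hm⟩

end IsFan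

variable (G) in
def Extends (C' C : PC G n) (x y₀ : V) : Prop :=
  (∀ u v, C.f u v ≠ none → C'.f u v ≠ none) ∧ C'.f x y₀ ≠ none

/-- A fan transfers to another coloring that agrees on the relevant edges. -/
lemma fan_of_eq {C C' : PC G n} {x : V} {l : List V} (h : IsFan G C x l)
    (hedge : ∀ z ∈ l, C'.f x z = C.f x z)
    (hmiss : ∀ y ∈ l, ∀ y' ∈ l, ∀ d : Fin n, C.f x y = some d →
      C.Missing d y' → C'.Missing d y') :
    IsFan G C' x l := by
  induction h with
  | single y₀ hadj hnone =>
      exact IsFan.single y₀ hadj ((hedge y₀ (by simp)).trans hnone)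
  | cons y y' rest h hadj hne c hc hm ih =>
      refine IsFan.cons y y' rest ?_ hadj hne c ((hedge y (by simp)).trans hc)
        (hmiss y (by simp) y' (by simp) c hc hm)
      exact ih (fun z hz => hedge z (List.mem_cons_of_mem _ hz))
        (fun z hz z' hz' => hmiss z (List.mem_cons_of_mem _ hz) z' (List.mem_cons_of_mem _ hz'))

/-- Rotating the fan: if some color is missing at both `x` and the fan's head,
we can extend the coloring to the uncolored edge at the end of the fan. -/
lemma rotate {x : V} : ∀ (l : List V) (C : PC G n) (h : IsFan G C x l)
    (β : Fin n), C.Missing β x → C.Missing β (l.head h.nonempty) →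
    ∃ C' : PC G n, Extends G C' C x (l.getLast h.nonempty) := by
  intro l
  induction l with
  | nil => intro C h; exact absurd rfl h.nonempty
  | cons y t ih =>
      intro C h β hbx hby
      replace hby : C.Missing β y := hby
      cases t with
      | nil =>
          have hadj : G.Adj x y := h.mem_adj y (by simp)
          refine ⟨C.setEdge x y β hadj hbx hby, fun u v hne => C.setEdge_dom hne, ?_⟩
          show (C.setEdge x y β hadj hbx hby).f x y ≠ none
          rw [C.setEdge_f_self]
          exact Option.some_ne_none _
      | cons y' rest =>
          obtain ⟨h', hadj, hne, c, hc, hm⟩ := h.cons_elim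
          · have hxy : x ≠ y := G.ne_of_adj hadj
            set C₁ := C.setEdge x y β hadj hbx hby with hC₁def
            have hedge : ∀ z ∈ y' :: rest, C₁.f x z = C.f x z := by
              intro z hz
              refine C.setEdge_f_eq ?_
              rintro (⟨-, rfl⟩ | ⟨h1, -⟩)
              · exact hne hz
              · exact hxy h1
            have hvert : ∀ z ∈ y' :: rest, ∀ d : Fin n, C.Missing d z → C₁.Missing d z := by
              intro z hz d hd v
              have hzx : z ≠ x := fun hzx => G.irrefl (hzx ▸ h'.mem_adj z hz)
              have hzy : z ≠ y := fun hzy => hne (hzy ▸ hz)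
              rw [C.setEdge_f_eq (by rintro (⟨h1, -⟩ | ⟨h1, -⟩); exacts [hzx h1, hzy h1])]
              exact hd v
            have hfan1 : IsFan G C₁ x (y' :: rest) :=
              fan_of_eq h' hedge (fun z _ z' hz' d _ hd => hvert z' hz' d hd)
            have hcx1 : C₁.Missing c x := by
              intro v hv
              by_cases hvy : v = y
              · rw [hvy] at hv
                rw [C.setEdge_f_self] at hv
                have hbc : β = c := by injection hv
                exact hbx y (by rw [hc, hbc])
              · rw [C.setEdge_f_eq (by rintro (⟨-, h2⟩ | ⟨h1, -⟩); exacts [hvy h2, hxy h1])] at hv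
                exact hvy (C.proper hv hc)
            have hcy1 : C₁.Missing c y' := hvert y' (by simp) c hm
            obtain ⟨C₂, hdom, hlast⟩ := ih C₁ hfan1 c hcx1 hcy1
            refine ⟨C₂, fun u v hnev => hdom u v (C.setEdge_dom hnev), ?_⟩
            rwa [List.getLast_cons]


section Swap

variable (C : PC G n) (a b : Fin n)

/-- The Kempe graph of colors `a`, `b`. -/
def kg : SimpleGraph V where
  Adj u v := C.f u v = some a ∨ C.f u v = some b
  symm := ⟨by intro u v h; rwa [C.symm] at h⟩
  loopless := ⟨by intro u h; have h0 := C.f_self u; cases h <;> simp_all⟩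

instance : DecidableRel (kg C a b).Adj := fun _ _ =>
  inferInstanceAs (Decidable (_ ∨ _))

lemma kg_flip : kg C a b = kg C b a := by
  ext u v; exact or_comm

lemma kg_degree_le_two (u : V) : (kg C a b).degree u ≤ 2 := by
  rw [← SimpleGraph.card_neighborFinset_eq_degree]
  classical
  have hcard : ((kg C a b).neighborFinset u).card ≤ ({a, b} : Finset (Fin n)).card := by
    refine Finset.card_le_card_of_injOn (fun v => if C.f u v = some a then a else b) ?_ ?_
    · intro v hv
      rw [Finset.mem_coe, SimpleGraph.mem_neighborFinset] at hv
      by_cases h : C.f u v = some a <;> simp [h]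
    · intro v hv w hw hvw
      rw [Finset.mem_coe, SimpleGraph.mem_neighborFinset] at hv hw
      by_cases h1 : C.f u v = some a <;> by_cases h2 : C.f u w = some a
      · exact C.proper h1 h2
      · simp only [if_pos h1, if_neg h2] at hvw
        rcases hw with hw | hw
        · exact absurd hw h2
        · exact absurd (hvw ▸ hw : C.f u w = some a) h2
      · simp only [if_neg h1, if_pos h2] at hvw
        rcases hv with hv | hv
        · exact absurd hv h1
        · exact absurd (hvw.symm ▸ hv : C.f u v = some a) h1
      · rcases hv with hv | hv
        · exact absurd hv h1
        rcases hw with hw | hw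
        · exact absurd hw h2
        exact C.proper hv hw
  calc ((kg C a b).neighborFinset u).card ≤ ({a, b} : Finset (Fin n)).card := hcard
    _ ≤ 2 := Finset.card_insert_le _ _ |>.trans (by simp)

lemma kg_degree_le_one {u : V} (h : C.Missing a u ∨ C.Missing b u) :
    (kg C a b).degree u ≤ 1 := by
  rw [← SimpleGraph.card_neighborFinset_eq_degree]
  rw [Finset.card_le_one]
  intro v hv w hw
  rw [SimpleGraph.mem_neighborFinset] at hv hw
  rcases h with h | h
  · rcases hv with hv | hv
    · exact absurd hv (h v)
    rcases hw with hw | hw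
    · exact absurd hw (h w)
    exact C.proper hv hw
  · rcases hv with hv | hv
    · rcases hw with hw | hw
      · exact C.proper hv hw
      · exact absurd hw (h w)
    · exact absurd hv (h v)

variable (x : V) {a b}

lemma kg_reachable_of_adj {u v : V} (hH : C.f u v = some a ∨ C.f u v = some b)
    (h : (kg C a b).Reachable x v) : (kg C a b).Reachable x u := by
  refine h.trans (SimpleGraph.Adj.reachable ?_)
  show C.f v u = some a ∨ C.f v u = some b
  rwa [← C.symm u v]

lemma flip_cond {u v : V} (hH : C.f u v = some a ∨ C.f u v = some b) :
    ((kg C a b).Reachable x u ∨ (kg C a b).Reachable x v) ↔ (kg C a b).Reachable x u := by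
  constructor
  · rintro (h | h)
    · exact h
    · exact kg_reachable_of_adj C x hH h
  · exact Or.inl

variable (hab : a ≠ b)

/-- Swap colors `a` and `b` on the Kempe component of `x`. -/
def swap (hab : a ≠ b) : PC G n where
  f u v := if ((kg C a b).Reachable x u ∨ (kg C a b).Reachable x v) ∧
      (C.f u v = some a ∨ C.f u v = some b) then
      (if C.f u v = some a then some b else some a) else C.f u v
  symm u v := by
    rw [C.symm u v]
    exact if_congr (and_congr_left' or_comm) rfl rfl
  adj u v := by
    intro hne
    by_cases hcond : ((kg C a b).Reachable x u ∨ (kg C a b).Reachable x v) ∧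
        (C.f u v = some a ∨ C.f u v = some b)
    · refine C.adj u v ?_
      rcases hcond.2 with h | h <;> simp [h]
    · rw [if_neg hcond] at hne
      exact C.adj u v hne
  proper := by
    intro u v w c h1 h2
    by_cases hv : ((kg C a b).Reachable x u ∨ (kg C a b).Reachable x v) ∧
        (C.f u v = some a ∨ C.f u v = some b) <;>
      by_cases hw : ((kg C a b).Reachable x u ∨ (kg C a b).Reachable x w) ∧
        (C.f u w = some a ∨ C.f u w = some b)
    · rw [if_pos hv] at h1
      rw [if_pos hw] at h2
      by_cases h1a : C.f u v = some a <;> by_cases h2a : C.f u w = some a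
      · exact C.proper h1a h2a
      · rw [if_pos h1a] at h1
        rw [if_neg h2a] at h2
        exact absurd ((Option.some_injective _ h1).trans (Option.some_injective _ h2).symm) hab.symm
      · rw [if_neg h1a] at h1
        rw [if_pos h2a] at h2
        exact absurd ((Option.some_injective _ h1).trans (Option.some_injective _ h2).symm) hab
      · rcases hv.2 with h | hvb
        · exact absurd h h1a
        rcases hw.2 with h | hwb
        · exact absurd h h2a
        exact C.proper hvb hwb
    · exfalso
      rw [if_pos hv] at h1
      rw [if_neg hw] at h2
      have hru : (kg C a b).Reachable x u := (flip_cond C x hv.2).1 hv.1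
      refine hw ⟨Or.inl hru, ?_⟩
      by_cases h1a : C.f u v = some a
      · rw [if_pos h1a] at h1
        rw [← (Option.some_injective _ h1)] at h2
        exact Or.inr h2
      · rw [if_neg h1a] at h1
        rw [← (Option.some_injective _ h1)] at h2
        exact Or.inl h2
    · exfalso
      rw [if_neg hv] at h1
      rw [if_pos hw] at h2
      have hru : (kg C a b).Reachable x u := (flip_cond C x hw.2).1 hw.1
      refine hv ⟨Or.inl hru, ?_⟩
      by_cases h2a : C.f u w = some a
      · rw [if_pos h2a] at h2
        rw [← (Option.some_injective _ h2)] at h1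
        exact Or.inr h1
      · rw [if_neg h2a] at h2
        rw [← (Option.some_injective _ h2)] at h1
        exact Or.inl h1
    · rw [if_neg hv] at h1
      rw [if_neg hw] at h2
      exact C.proper h1 h2

lemma swap_f_of_not_cond {u v : V}
    (hc : ¬(((kg C a b).Reachable x u ∨ (kg C a b).Reachable x v) ∧
      (C.f u v = some a ∨ C.f u v = some b))) :
    (swap C x hab).f u v = C.f u v := if_neg hc

lemma swap_f_of_not_ab {u v : V} (ha : C.f u v ≠ some a) (hb : C.f u v ≠ some b) :
    (swap C x hab).f u v = C.f u v := if_neg (fun h => h.2.elim ha hb)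

lemma swap_dom {u v : V} (h : C.f u v ≠ none) : (swap C x hab).f u v ≠ none := by
  show (if _ then _ else _) ≠ none
  by_cases hc : ((kg C a b).Reachable x u ∨ (kg C a b).Reachable x v) ∧
      (C.f u v = some a ∨ C.f u v = some b)
  · rw [if_pos hc]
    by_cases h1 : C.f u v = some a <;> simp [h1]
  · rwa [if_neg hc]

lemma swap_f_none {u v : V} (h : C.f u v = none) : (swap C x hab).f u v = none := by
  rw [swap_f_of_not_ab C x hab (by simp [h]) (by simp [h])]
  exact h

lemma swap_f_of_not_reach {u v : V} (h : ¬(kg C a b).Reachable x u) :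
    (swap C x hab).f u v = C.f u v := by
  by_cases hH : C.f u v = some a ∨ C.f u v = some b
  · exact if_neg (fun hc => h ((flip_cond C x hH).1 hc.1))
  · exact if_neg (fun hc => hH hc.2)

lemma swap_f_a {u v : V} (hr : (kg C a b).Reachable x u) (hf : C.f u v = some a) :
    (swap C x hab).f u v = some b := by
  show (if _ then _ else _) = _
  rw [if_pos ⟨Or.inl hr, Or.inl hf⟩, if_pos hf]

lemma swap_f_b {u v : V} (hr : (kg C a b).Reachable x u) (hf : C.f u v = some b) :
    (swap C x hab).f u v = some a := by
  show (if _ then _ else _) = _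
  rw [if_pos ⟨Or.inl hr, Or.inr hf⟩, if_neg (fun h => hab (Option.some_injective _ (h.symm.trans hf)))]

lemma swap_f_b_iff {u v : V} (hr : (kg C a b).Reachable x u) :
    (swap C x hab).f u v = some b ↔ C.f u v = some a := by
  constructor
  · intro h
    by_cases hc : ((kg C a b).Reachable x u ∨ (kg C a b).Reachable x v) ∧
        (C.f u v = some a ∨ C.f u v = some b)
    · by_cases h1 : C.f u v = some a
      · exact h1
      · exfalso
        have : (swap C x hab).f u v = some a := by
          show (if _ then _ else _) = _
          rw [if_pos hc, if_neg h1]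
        rw [h] at this
        exact hab (Option.some_injective _ this).symm
    · exfalso
      have heq : (swap C x hab).f u v = C.f u v := if_neg hc
      rw [h] at heq
      exact hc ⟨Or.inl hr, Or.inr heq.symm⟩
  · exact swap_f_a C x hab hr

lemma swap_f_a_iff {u v : V} (hr : (kg C a b).Reachable x u) :
    (swap C x hab).f u v = some a ↔ C.f u v = some b := by
  constructor
  · intro h
    by_cases hc : ((kg C a b).Reachable x u ∨ (kg C a b).Reachable x v) ∧
        (C.f u v = some a ∨ C.f u v = some b)
    · by_cases h1 : C.f u v = some a
      · exfalso
        have : (swap C x hab).f u v = some b := swap_f_a C x hab hr h1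
        rw [h] at this
        exact hab (Option.some_injective _ this)
      · exact hc.2.resolve_left h1
    · exfalso
      have heq : (swap C x hab).f u v = C.f u v := if_neg hc
      rw [h] at heq
      exact hc ⟨Or.inl hr, Or.inl heq.symm⟩
  · exact swap_f_b C x hab hr

lemma swap_missing_b {u : V} (hr : (kg C a b).Reachable x u) :
    (swap C x hab).Missing b u ↔ C.Missing a u :=
  forall_congr' fun v => not_congr (swap_f_b_iff C x hab hr)

lemma swap_missing_a {u : V} (hr : (kg C a b).Reachable x u) :
    (swap C x hab).Missing a u ↔ C.Missing b u :=
  forall_congr' fun v => not_congr (swap_f_a_iff C x hab hr)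

lemma swap_missing_of_not_reach {u : V} (h : ¬(kg C a b).Reachable x u) (c : Fin n) :
    (swap C x hab).Missing c u ↔ C.Missing c u :=
  forall_congr' fun v => by rw [swap_f_of_not_reach C x hab h]

lemma swap_missing_of_not_ab {c : Fin n} (hca : c ≠ a) (hcb : c ≠ b) (u : V) :
    (swap C x hab).Missing c u ↔ C.Missing c u := by
  refine forall_congr' fun v => not_congr ?_
  by_cases hc : ((kg C a b).Reachable x u ∨ (kg C a b).Reachable x v) ∧
      (C.f u v = some a ∨ C.f u v = some b)
  · have hlhs : (swap C x hab).f u v ≠ some c := by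
      show (if _ then _ else _) ≠ some c
      rw [if_pos hc]
      by_cases h1 : C.f u v = some a
      · rw [if_pos h1]
        exact fun h => hcb (Option.some_injective _ h).symm
      · rw [if_neg h1]
        exact fun h => hca (Option.some_injective _ h).symm
    have hrhs : C.f u v ≠ some c := by
      rcases hc.2 with h | h <;> rw [h]
      · exact fun hh => hca (Option.some_injective _ hh).symm
      · exact fun hh => hcb (Option.some_injective _ hh).symm
    simp [hlhs, hrhs]
  · rw [swap_f_of_not_cond C x hab hc]

end Swap

section Leaves

variable {K : SimpleGraph V} [DecidableRel K.Adj]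

lemma adj_eq_of_degree_le_one {z c a : V} (hd : K.degree z ≤ 1) (ha : K.Adj z a)
    (hc : K.Adj z c) : c = a := by
  by_contra hca
  have hsub : ({c, a} : Finset V) ⊆ K.neighborFinset z := by
    intro w hw
    rw [Finset.mem_insert, Finset.mem_singleton] at hw
    rw [SimpleGraph.mem_neighborFinset]
    rcases hw with rfl | rfl <;> assumption
  have : 2 ≤ K.degree z := by
    rw [← SimpleGraph.card_neighborFinset_eq_degree, ← Finset.card_pair hca]
    exact Finset.card_le_card hsub
  omega

lemma adj_eq_of_degree_le_two {z c a b : V} (hd : K.degree z ≤ 2) (ha : K.Adj z a)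
    (hb : K.Adj z b) (hab : a ≠ b) (hc : K.Adj z c) : c = a ∨ c = b := by
  by_contra hcon
  push_neg at hcon
  have hsub : ({c, a, b} : Finset V) ⊆ K.neighborFinset z := by
    intro w hw
    simp only [Finset.mem_insert, Finset.mem_singleton] at hw
    rw [SimpleGraph.mem_neighborFinset]
    rcases hw with rfl | rfl | rfl <;> assumption
  have : 3 ≤ K.degree z := by
    rw [← SimpleGraph.card_neighborFinset_eq_degree]
    refine le_trans ?_ (Finset.card_le_card hsub)
    rw [Finset.card_insert_of_notMem (by simp [hcon.1, hcon.2]), Finset.card_pair hab]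
  omega

lemma two_le_degree_of_interior {u v : V} (p : K.Walk u v) (hp : p.IsPath) :
    ∀ z ∈ p.support, z ≠ u → z ≠ v → 2 ≤ K.degree z := by
  induction p with
  | nil =>
      intro z hz hzu _
      rw [SimpleGraph.Walk.support_nil, List.mem_singleton] at hz
      exact absurd hz hzu
  | @cons u u₁ w h q ih =>
      intro z hz hzu hzw
      rw [SimpleGraph.Walk.support_cons, List.mem_cons] at hz
      rcases hz with rfl | hz
      · exact absurd rfl hzu
      rw [SimpleGraph.Walk.cons_isPath_iff] at hp
      by_cases hz1 : z = u₁
      · subst hz1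
        cases q with
        | nil => exact absurd rfl hzw
        | @cons _ u₂ _ h₂ q₂ =>
            have hu2 : u₂ ∈ (SimpleGraph.Walk.cons h₂ q₂).support := by
              rw [SimpleGraph.Walk.support_cons]
              exact List.mem_cons_of_mem _ q₂.start_mem_support
            have hne : u ≠ u₂ := fun he => hp.2 (he ▸ hu2)
            have hsub : ({u, u₂} : Finset V) ⊆ K.neighborFinset z := by
              intro w' hw'
              rw [Finset.mem_insert, Finset.mem_singleton] at hw'
              rw [SimpleGraph.mem_neighborFinset]
              rcases hw' with rfl | rfl
              · exact h.symm
              · exact h₂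
            rw [← SimpleGraph.card_neighborFinset_eq_degree, ← Finset.card_pair hne]
            exact Finset.card_le_card hsub
      · exact ih hp.1 z hz hz1 hzw

lemma support_closed_aux {u v : V} (p : K.Walk u v) (hp : p.IsPath)
    (hdeg2 : ∀ w, K.degree w ≤ 2) (hv : K.degree v ≤ 1) :
    ∀ z ∈ p.support, ∀ z', K.Adj z z' → z' ∈ p.support ∨ z = u := by
  induction p with
  | nil =>
      intro z hz z' _
      rw [SimpleGraph.Walk.support_nil, List.mem_singleton] at hz
      exact Or.inr hz
  | @cons u u₁ w h q ih =>
      intro z hz z' hzz'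
      rw [SimpleGraph.Walk.support_cons, List.mem_cons] at hz
      rcases hz with rfl | hz
      · exact Or.inr rfl
      rw [SimpleGraph.Walk.cons_isPath_iff] at hp
      rcases ih hp.1 hv z hz z' hzz' with hin | rfl
      · left
        rw [SimpleGraph.Walk.support_cons]
        exact List.mem_cons_of_mem _ hin
      · -- z = u₁ (start of q)
        left
        rw [SimpleGraph.Walk.support_cons]
        cases q with
        | nil =>
            have : z' = u := adj_eq_of_degree_le_one hv h.symm hzz'
            subst this
            exact List.mem_cons_self
        | @cons _ u₂ _ h₂ q₂ =>
            have hu2 : u₂ ∈ (SimpleGraph.Walk.cons h₂ q₂).support := by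
              rw [SimpleGraph.Walk.support_cons]
              exact List.mem_cons_of_mem _ q₂.start_mem_support
            have hne : u ≠ u₂ := fun he => hp.2 (he ▸ hu2)
            rcases adj_eq_of_degree_le_two (hdeg2 z) h.symm h₂ hne hzz' with rfl | rfl
            · exact List.mem_cons_self
            · exact List.mem_cons_of_mem _ hu2

lemma support_closed {u v : V} (p : K.Walk u v) (hp : p.IsPath)
    (hdeg2 : ∀ w, K.degree w ≤ 2) (hu : K.degree u ≤ 1) (hv : K.degree v ≤ 1)
    (huv : u ≠ v) :
    ∀ z ∈ p.support, ∀ z', K.Adj z z' → z' ∈ p.support := by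
  intro z hz z' hzz'
  rcases support_closed_aux p hp hdeg2 hv z hz z' hzz' with hin | rfl
  · exact hin
  · cases p with
    | nil => exact absurd rfl huv
    | @cons _ u₁ _ h q =>
        have : z' = u₁ := adj_eq_of_degree_le_one hu h hzz'
        subst this
        rw [SimpleGraph.Walk.support_cons]
        exact List.mem_cons_of_mem _ q.start_mem_support

lemma walk_mem_of_closed {u v s t : V} {p : K.Walk u v}
    (hcl : ∀ z ∈ p.support, ∀ z', K.Adj z z' → z' ∈ p.support)
    (w : K.Walk s t) (hs : s ∈ p.support) : t ∈ p.support := by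
  induction w with
  | nil => exact hs
  | @cons s s₁ t h q ih => exact ih (hcl s hs s₁ h)

/-- A connected graph of maximum degree 2 cannot contain three distinct leaves. -/
lemma three_leaves (hdeg2 : ∀ w, K.degree w ≤ 2) {s t r : V}
    (hst : s ≠ t) (hsr : s ≠ r) (htr : t ≠ r)
    (hs : K.degree s ≤ 1) (ht : K.degree t ≤ 1) (hr : K.degree r ≤ 1)
    (h1 : K.Reachable s t) (h2 : K.Reachable s r) : False := by
  obtain ⟨w⟩ := h1.symm.trans h2
  let p := w.toPath
  have hcl := support_closed p.val p.property hdeg2 ht hr htr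
  obtain ⟨w'⟩ := h1.symm
  have hsmem : s ∈ p.val.support :=
    walk_mem_of_closed hcl w' p.val.start_mem_support
  have := two_le_degree_of_interior p.val p.property s hsmem hst hsr
  omega

end Leaves

section Lists

variable {α : Type*}

lemma split_at_mem_ne_getLast {l : List α} {z : α} (hz : z ∈ l) (hne : l ≠ [])
    (h : z ≠ l.getLast hne) : ∃ l₁ w l₂, l = l₁ ++ z :: w :: l₂ := by
  induction l with
  | nil => cases hz
  | cons a t ih =>
      rcases List.mem_cons.1 hz with rfl | hz
      · cases t with
        | nil => exact absurd rfl h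
        | cons w l₂ => exact ⟨[], w, l₂, rfl⟩
      · have htne : t ≠ [] := List.ne_nil_of_mem hz
        have h' : z ≠ t.getLast htne := by
          rwa [List.getLast_cons htne] at h
        obtain ⟨l₁, w, l₂, rfl⟩ := ih hz htne h'
        exact ⟨a :: l₁, w, l₂, rfl⟩

lemma append_cons_inj {z : α} : ∀ {l₁ l₂ t₁ t₂ : List α},
    l₁ ++ z :: t₁ = l₂ ++ z :: t₂ → (l₁ ++ z :: t₁).Nodup → t₁ = t₂ := by
  intro l₁
  induction l₁ with
  | nil =>
      intro l₂ t₁ t₂ heq hnd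
      cases l₂ with
      | nil => simpa using heq
      | cons b l₂' =>
          exfalso
          have h1 : z = b ∧ t₁ = l₂' ++ z :: t₂ := by
            have := heq
            simp only [List.nil_append, List.cons_append, List.cons.injEq] at this
            exact this
          rw [List.nil_append, List.nodup_cons] at hnd
          exact hnd.1 (h1.2 ▸ (List.mem_append_right _ (List.mem_cons_self)))
  | cons a l₁' ih =>
      intro l₂ t₁ t₂ heq hnd
      cases l₂ with
      | nil =>
          exfalso
          have h1 : a = z ∧ l₁' ++ z :: t₁ = t₂ := by
            simpa using heq
          rw [List.cons_append, List.nodup_cons] at hnd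
          exact hnd.1 (h1.1 ▸ List.mem_append_right _ (List.mem_cons_self))
      | cons b l₂' =>
        have h1 : a = b ∧ l₁' ++ z :: t₁ = l₂' ++ z :: t₂ := by
          simpa using heq
        rw [List.cons_append, List.nodup_cons] at hnd
        exact ih h1.2 hnd.2

end Lists

lemma IsFan.suffix {C : PC G n} {x : V} : ∀ (l₁ : List V) {m : List V},
    IsFan G C x (l₁ ++ m) → m ≠ [] → IsFan G C x m := by
  intro l₁
  induction l₁ with
  | nil => intro m h _; exact h
  | cons a l₁' ih =>
      intro m h hm
      obtain ⟨b, r, hbr⟩ : ∃ b r, l₁' ++ m = b :: r := by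
        cases hl : l₁' ++ m with
        | nil => exact absurd (List.append_eq_nil_iff.1 hl).2 hm
        | cons b r => exact ⟨b, r, rfl⟩
      rw [List.cons_append, hbr] at h
      have h' := h.cons_elim.1
      rw [← hbr] at h'
      exact ih h' hm

lemma IsFan.extend {C : PC G n} {x z : V} {l : List V} (h : IsFan G C x l)
    (hadj : G.Adj x z) (hz : z ∉ l) {c : Fin n} (hc : C.f x z = some c)
    (hm : C.Missing c (l.head h.nonempty)) : IsFan G C x (z :: l) := by
  cases l with
  | nil => exact absurd rfl h.nonempty
  | cons y' rest => exact IsFan.cons z y' rest h hadj hz c hc hm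

/-- There is a maximal fan ending (in our reversed order) at the uncolored edge `x y₀`. -/
lemma exists_max_fan (C : PC G n) {x y₀ : V} (hadj : G.Adj x y₀)
    (hnone : C.f x y₀ = none) :
    ∃ (l : List V) (h : IsFan G C x l), l.getLast h.nonempty = y₀ ∧
      ∀ z, G.Adj x z → z ∉ l → ∀ c : Fin n, C.f x z = some c →
        ¬C.Missing c (l.head h.nonempty) := by
  suffices key : ∀ m (l : List V) (hf : IsFan G C x l), l.getLast hf.nonempty = y₀ →
      Fintype.card V - l.length = m →
      ∃ (l' : List V) (h : IsFan G C x l'), l'.getLast h.nonempty = y₀ ∧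
      ∀ z, G.Adj x z → z ∉ l' → ∀ c : Fin n, C.f x z = some c →
        ¬C.Missing c (l'.head h.nonempty) by
    exact key _ [y₀] (IsFan.single y₀ hadj hnone) rfl rfl
  intro m
  induction m using Nat.strong_induction_on with
  | _ m ih =>
      intro l hf hlast hm
      by_cases hext : ∃ z, G.Adj x z ∧ z ∉ l ∧ ∃ c : Fin n, C.f x z = some c ∧
          C.Missing c (l.head hf.nonempty)
      · obtain ⟨z, hzadj, hzl, c, hc, hcm⟩ := hext
        have hf' : IsFan G C x (z :: l) := hf.extend hzadj hzl hc hcm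
        have hlen : (z :: l).length ≤ Fintype.card V := hf'.nodup.length_le_card
        have hlast' : (z :: l).getLast hf'.nonempty = y₀ := by
          rwa [List.getLast_cons hf.nonempty]
        have hlt : Fintype.card V - (z :: l).length < m := by
          simp only [List.length_cons] at hlen ⊢
          omega
        exact ih _ hlt (z :: l) hf' hlast' rfl
      · push_neg at hext
        exact ⟨l, hf, hlast, fun z h1 h2 c h3 => hext z h1 h2 c h3⟩

lemma head_not_mem_tail {α : Type*} {l : List α} (hnd : l.Nodup) (hne : l ≠ []) :
    l.head hne ∉ l.tail := by
  cases l with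
  | nil => exact absurd rfl hne
  | cons a t =>
      rw [List.nodup_cons] at hnd
      simpa using hnd.1

lemma fan_swap_hard {C : PC G n} {a b : Fin n} (hab : a ≠ b) {x z w : V}
    {l l₁ l₂ : List V} (hnd : l.Nodup) (hdecomp : l = l₁ ++ z :: w :: l₂)
    (hz : C.f x z = some b) (hax : C.Missing a x) (hbw : C.Missing b w)
    (hrw : (kg C a b).Reachable x w) :
    ∀ (m : List V), IsFan G C x m → (∃ l₀, l = l₀ ++ m) →
      IsFan G (swap C x hab) x m := by
  intro m hm
  induction hm with
  | single y₀ hadj hnone =>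
      intro _
      exact IsFan.single y₀ hadj (swap_f_none C x hab hnone)
  | cons y y' rest h hadj hne c hc hmisss ih =>
      rintro ⟨l₀, hl₀⟩
      have hfan' : IsFan G (swap C x hab) x (y' :: rest) :=
        ih ⟨l₀ ++ [y], by rw [hl₀]; simp⟩
      by_cases hcb : c = b
      · have hyz : y = z := C.proper (hcb ▸ hc) hz
        have hlists : w :: l₂ = y' :: rest := by
          refine append_cons_inj (z := z) (l₁ := l₁) (l₂ := l₀) ?_ ?_
          · rw [← hdecomp, hl₀, hyz]
          · rw [← hdecomp]
            exact hnd
        have hy'w : y' = w := by injection hlists with h1 h2; exact h1.symm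
        refine IsFan.cons y y' rest hfan' hadj hne a ?_ ?_
        · rw [hyz]
          exact swap_f_b C x hab (SimpleGraph.Reachable.refl x) hz
        · rw [hy'w]
          exact (swap_missing_a C x hab hrw).2 hbw
      · have hca : c ≠ a := fun hca' => hax y (hca' ▸ hc)
        refine IsFan.cons y y' rest hfan' hadj hne c ?_ ?_
        · rw [swap_f_of_not_ab C x hab
            (by rw [hc]; exact fun h' => hca (Option.some_injective _ h'))
            (by rw [hc]; exact fun h' => hcb (Option.some_injective _ h'))]
          exact hc
        · exact (swap_missing_of_not_ab C x hab hca hcb y').2 hmisss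

/-- The key extension lemma: any uncolored edge can be colored, possibly after
recoloring other edges. -/
lemma extend (hn : ∀ v : V, G.degree v < n) (C : PC G n) {x y₀ : V}
    (hadj : G.Adj x y₀) (hnone : C.f x y₀ = none) :
    ∃ C' : PC G n, Extends G C' C x y₀ := by
  obtain ⟨a, hax⟩ := C.exists_missing hn x
  obtain ⟨l, hf, hlast, hmax⟩ := exists_max_fan C hadj hnone
  obtain ⟨b, hbh⟩ := C.exists_missing hn (l.head hf.nonempty)
  by_cases hbx : C.Missing b x
  · obtain ⟨C', hC'⟩ := rotate l C hf b hbx hbh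
    rw [hlast] at hC'
    exact ⟨C', hC'⟩
  · have hzex : ∃ v, C.f x v = some b := by
      simp only [PC.Missing, not_forall, not_not] at hbx
      exact hbx
    obtain ⟨z, hz⟩ := hzex
    have hzadj : G.Adj x z := C.adj x z (by rw [hz]; exact Option.some_ne_none _)
    have hzl : z ∈ l := by
      by_contra hzl
      exact hmax z hzadj hzl b hz hbh
    have hzlast : z ≠ l.getLast hf.nonempty := by
      intro he
      rw [hlast] at he
      rw [he, hnone] at hz
      exact nomatch hz
    obtain ⟨l₁, w, l₂, hdecomp⟩ := split_at_mem_ne_getLast hzl hf.nonempty hzlast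
    have hsufz : IsFan G C x (z :: w :: l₂) :=
      IsFan.suffix l₁ (hdecomp ▸ hf) (by simp)
    obtain ⟨hfw, -, hznotin, c', hc', hmw⟩ := hsufz.cons_elim
    have hcb : c' = b := Option.some_injective _ (hc'.symm.trans hz)
    have hbw : C.Missing b w := hcb ▸ hmw
    have hab : a ≠ b := fun h => hax z (h ▸ hz)
    have hdeg2 := kg_degree_le_two C a b
    have hdegx : (kg C a b).degree x ≤ 1 := kg_degree_le_one C a b (Or.inl hax)
    have hdegw : (kg C a b).degree w ≤ 1 := kg_degree_le_one C a b (Or.inr hbw)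
    have hdegh : (kg C a b).degree (l.head hf.nonempty) ≤ 1 :=
      kg_degree_le_one C a b (Or.inr hbh)
    have hwmem : w ∈ l := by rw [hdecomp]; simp
    have hlastw : (w :: l₂).getLast (by simp) = y₀ := by
      have h1 : l.getLast? = some y₀ := by
        rw [List.getLast?_eq_getLast_of_ne_nil hf.nonempty, hlast]
      have h2 : (w :: l₂).getLast? = some y₀ := by
        rw [hdecomp] at h1
        rwa [List.getLast?_append_of_ne_nil l₁ (by simp : z :: w :: l₂ ≠ []),
          List.getLast?_cons_cons] at h1
      rw [List.getLast?_eq_getLast_of_ne_nil (by simp : w :: l₂ ≠ [])] at h2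
      injection h2
    by_cases hrw : (kg C a b).Reachable x w
    · -- the component of x contains w : swap it and rotate the full fan
      have hxw : x ≠ w := G.ne_of_adj (hf.mem_adj w hwmem)
      have hxh : x ≠ l.head hf.nonempty :=
        G.ne_of_adj (hf.mem_adj _ (List.head_mem _))
      have hwtail : w ∈ l.tail := by
        rw [hdecomp]
        cases l₁ <;> simp
      have hwh : w ≠ l.head hf.nonempty :=
        fun he => head_not_mem_tail hf.nodup hf.nonempty (he ▸ hwtail)
      have hnrh : ¬(kg C a b).Reachable x (l.head hf.nonempty) := fun hrh =>
        three_leaves hdeg2 hxw hxh hwh hdegx hdegw hdegh hrw hrh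
      have hbx' : (swap C x hab).Missing b x :=
        (swap_missing_b C x hab (SimpleGraph.Reachable.refl x)).2 hax
      have hbh' : (swap C x hab).Missing b (l.head hf.nonempty) :=
        (swap_missing_of_not_reach C x hab hnrh b).2 hbh
      have hfan' : IsFan G (swap C x hab) x l :=
        fan_swap_hard hab hf.nodup hdecomp hz hax hbw hrw l hf ⟨[], rfl⟩
      obtain ⟨C'', hdom, hedge⟩ := rotate l (swap C x hab) hfan' b hbx' hbh'
      refine ⟨C'', fun u v hne => hdom u v (swap_dom C x hab hne), ?_⟩
      rwa [hlast] at hedge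
    · -- w is not in the component of x : swap it and rotate the short fan
      have hbx' : (swap C x hab).Missing b x :=
        (swap_missing_b C x hab (SimpleGraph.Reachable.refl x)).2 hax
      have hbw' : (swap C x hab).Missing b w :=
        (swap_missing_of_not_reach C x hab hrw b).2 hbw
      have hfanw' : IsFan G (swap C x hab) x (w :: l₂) := by
        refine fan_of_eq hfw ?_ ?_
        · intro t ht
          refine swap_f_of_not_ab C x hab (hax t) ?_
          intro hb'
          exact hznotin ((C.proper hb' hz) ▸ ht)
        · intro y hy y' hy' d hd' hmiss'
          have hda : d ≠ a := fun h' => hax y (h' ▸ hd')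
          have hdb : d ≠ b := fun h' => hznotin ((C.proper (h' ▸ hd') hz) ▸ hy)
          exact (swap_missing_of_not_ab C x hab hda hdb y').2 hmiss'
      obtain ⟨C'', hdom, hedge⟩ := rotate (w :: l₂) (swap C x hab) hfanw' b hbx' hbw'
      refine ⟨C'', fun u v hne => hdom u v (swap_dom C x hab hne), ?_⟩
      rwa [hlastw] at hedge

/-- Every graph with all degrees `< n` has a total proper `n`-edge-coloring. -/
lemma exists_total (hn : ∀ v : V, G.degree v < n) :
    ∃ C : PC G n, ∀ u v, G.Adj u v → C.f u v ≠ none := by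
  classical
  let C₀ : PC G n :=
    ⟨fun _ _ => none, fun _ _ => rfl, fun _ _ h => absurd rfl h,
      fun _ _ _ _ h => by cases h⟩
  suffices key : ∀ (k : ℕ) (C : PC G n),
      (Finset.univ.filter (fun p : V × V => G.Adj p.1 p.2 ∧ C.f p.1 p.2 = none)).card = k →
      ∃ C' : PC G n, ∀ u v, G.Adj u v → C'.f u v ≠ none by
    exact key _ C₀ rfl
  intro k
  induction k using Nat.strong_induction_on with
  | _ k ih =>
      intro C hk
      by_cases hempty : ∃ p : V × V, G.Adj p.1 p.2 ∧ C.f p.1 p.2 = none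
      · obtain ⟨⟨x, y⟩, hxy, hcxy⟩ := hempty
        obtain ⟨C₁, hdom, hcol⟩ := extend hn C hxy hcxy
        have hmem : (x, y) ∈ Finset.univ.filter
            (fun p : V × V => G.Adj p.1 p.2 ∧ C.f p.1 p.2 = none) := by
          simp [hxy, hcxy]
        have hsub : Finset.univ.filter
            (fun p : V × V => G.Adj p.1 p.2 ∧ C₁.f p.1 p.2 = none) ⊆
            (Finset.univ.filter
              (fun p : V × V => G.Adj p.1 p.2 ∧ C.f p.1 p.2 = none)).erase (x, y) := by
          intro p hp
          rw [Finset.mem_filter] at hp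
          rw [Finset.mem_erase, Finset.mem_filter]
          refine ⟨?_, by simp, hp.2.1, ?_⟩
          · rintro rfl
            exact hcol hp.2.2
          · by_contra hne
            exact hdom p.1 p.2 hne hp.2.2
        have hlt : (Finset.univ.filter
            (fun p : V × V => G.Adj p.1 p.2 ∧ C₁.f p.1 p.2 = none)).card < k := by
          calc _ ≤ _ := Finset.card_le_card hsub
            _ < _ := by
              rw [← hk]
              exact Finset.card_erase_lt_of_mem hmem
        exact ih _ hlt C₁ rfl
      · push_neg at hempty
        exact ⟨C, fun u v h => hempty (u, v) h⟩

end Vizing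

/-- Every graph `G` with maximum degree `Δ` admits a proper edge
colouring using colours from any prescribed set `L` of `Δ+1` integers: there is an
assignment of colours from `L` to the edges of `G` such that distinct edges sharing
a vertex receive distinct colours. -/
theorem stmt_19 {V : Type*} [Fintype V] [DecidableEq V]
    (G : SimpleGraph V) [DecidableRel G.Adj]
    (L : Finset ℤ) (hL : L.card = G.maxDegree + 1) :
    ∃ c : Sym2 V → ℤ,
      (∀ e ∈ G.edgeSet, c e ∈ L) ∧
      ∀ e₁ ∈ G.edgeSet, ∀ e₂ ∈ G.edgeSet, e₁ ≠ e₂ →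
        (∃ v : V, v ∈ e₁ ∧ v ∈ e₂) → c e₁ ≠ c e₂ := by
  classical
  set n := G.maxDegree + 1 with hn_def
  have hn : ∀ v : V, G.degree v < n := fun v =>
    Nat.lt_succ_of_le (G.degree_le_maxDegree v)
  obtain ⟨C, hC⟩ := exists_total hn
  let ι : Fin n → ℤ := fun c => ((L.orderIsoOfFin hL c : ℤ))
  have hιinj : Function.Injective ι := fun c₁ c₂ h =>
    (L.orderIsoOfFin hL).injective (Subtype.ext h)
  have hιmem : ∀ c, ι c ∈ L := fun c => (L.orderIsoOfFin hL c).2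
  let d : Fin n := ⟨0, Nat.succ_pos _⟩
  refine ⟨Sym2.lift ⟨fun u v => ι ((C.f u v).getD d), fun u v => by dsimp only; rw [C.symm]⟩, ?_, ?_⟩
  · intro e _
    induction e with
    | _ u v => exact hιmem _
  · intro e₁ he₁ e₂ he₂ hne ⟨v, hv₁, hv₂⟩
    obtain ⟨p, hp⟩ : ∃ p, e₁ = s(v, p) := ⟨Sym2.Mem.other hv₁, (Sym2.other_spec hv₁).symm⟩
    obtain ⟨q, hq⟩ : ∃ q, e₂ = s(v, q) := ⟨Sym2.Mem.other hv₂, (Sym2.other_spec hv₂).symm⟩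
    subst hp hq
    have hadj₁ : G.Adj v p := G.mem_edgeSet.1 he₁
    have hadj₂ : G.Adj v q := G.mem_edgeSet.1 he₂
    obtain ⟨c₁, hc₁⟩ := Option.ne_none_iff_exists'.1 (hC v p hadj₁)
    obtain ⟨c₂, hc₂⟩ := Option.ne_none_iff_exists'.1 (hC v q hadj₂)
    simp only [Sym2.lift_mk, hc₁, hc₂, Option.getD_some]
    intro heq
    have : c₁ = c₂ := hιinj heq
    exact hne (by rw [C.proper hc₁ (this ▸ hc₂)])
end
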